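/- arXiv:2203.07343 — 5 statements merged into one kernel-verified Lean document; each statement's English description precedes it below -/
import Mathlib

section
/- Let k ≥ 1 be an integer, let (r1, r2, r3) ∈ ℚ³ satisfy 2k·r1 − r2 − r3 = 0 and r1 + r2 + r3 = 1, and let N be a positive integer such that N·r1, N·r2 and N·r3 are all integers. Then 2k+1 divides N; in particular N ≥ 2k+1. -/
/-- Any size `N` of a complete complex built from the pot realizing `L_{2k,1}`
(Example 3.5) is divisible by `2k+1`: if `(r₁, r₂, r₃)` solves the construction-matrix
system and `N·rᵢ` are integers for a positive integer `N`, then `2k+1 ∣ N`, so `N ≥ 2k+1`. -/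
theorem complex_size_L2k1 (k : ℕ) (hk : 1 ≤ k) (r1 r2 r3 : ℚ)
    (h1 : 2 * (k : ℚ) * r1 - r2 - r3 = 0) (h2 : r1 + r2 + r3 = 1)
    (N : ℕ) (hN : 0 < N)
    (hz1 : ∃ z : ℤ, (N : ℚ) * r1 = z) (hz2 : ∃ z : ℤ, (N : ℚ) * r2 = z)
    (hz3 : ∃ z : ℤ, (N : ℚ) * r3 = z) :
    (2 * k + 1) ∣ N ∧ 2 * k + 1 ≤ N := by
  obtain ⟨z, hz⟩ := hz1
  have hr1 : (2 * (k : ℚ) + 1) * r1 = 1 := by linarith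
  have hNz : (N : ℚ) = z * (2 * (k : ℚ) + 1) := by
    have : (N : ℚ) = (N : ℚ) * ((2 * (k : ℚ) + 1) * r1) := by rw [hr1]; ring
    rw [this]; rw [show (N : ℚ) * ((2 * (k : ℚ) + 1) * r1) = ((N : ℚ) * r1) * (2 * (k : ℚ) + 1) by ring, hz]
  have hint : (N : ℤ) = z * (2 * (k : ℤ) + 1) := by
    exact_mod_cast hNz
  have hdvd : ((2 * k + 1 : ℕ) : ℤ) ∣ (N : ℤ) := ⟨z, by push_cast; linarith [hint]⟩
  have hd : (2 * k + 1) ∣ N := Int.ofNat_dvd.mp hdvd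
  exact ⟨hd, Nat.le_of_dvd hN hd⟩
end

section
/- Let k ≥ 1 be an integer, let (r1, r2, r3, r4) ∈ ℚ⁴ satisfy (2k+1)·r1 − r2 − r3 − r4 = 0, r3 − r2 = 0, and r1 + r2 + r3 + r4 = 1, and let N be a positive integer such that N·r_i is an integer for i = 1, 2, 3, 4. Then 2k+2 divides N; in particular N ≥ 2k+2. -/
/-- Any size `N` of a complete complex built from the pot of Proposition 3.7 realizing
`L_{2k+1,1}` is divisible by `2k+2`: if `(r₁, r₂, r₃, r₄)` solves the construction-matrix
system and `N·rᵢ` are integers for a positive integer `N`, then `2k+2 ∣ N`, so `N ≥ 2k+2`. -/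
theorem complex_size_L2k1_odd (k : ℕ) (hk : 1 ≤ k) (r1 r2 r3 r4 : ℚ)
    (h1 : (2 * (k : ℚ) + 1) * r1 - r2 - r3 - r4 = 0) (h2 : r3 - r2 = 0)
    (h3 : r1 + r2 + r3 + r4 = 1)
    (N : ℕ) (hN : 0 < N)
    (hz1 : ∃ z : ℤ, (N : ℚ) * r1 = z) (hz2 : ∃ z : ℤ, (N : ℚ) * r2 = z)
    (hz3 : ∃ z : ℤ, (N : ℚ) * r3 = z) (hz4 : ∃ z : ℤ, (N : ℚ) * r4 = z) :
    (2 * k + 2) ∣ N ∧ 2 * k + 2 ≤ N := by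
  have hr1 : (2 * (k : ℚ) + 2) * r1 = 1 := by linarith
  obtain ⟨z, hz⟩ := hz1
  have hNz : (N : ℚ) = (2 * (k : ℚ) + 2) * z := by
    linear_combination (2 * (k : ℚ) + 2) * hz - (N : ℚ) * hr1
  have hNz' : (N : ℤ) = (2 * (k : ℤ) + 2) * z := by exact_mod_cast hNz
  have hdvd : (2 * k + 2) ∣ N := by
    have : ((2 * k + 2 : ℕ) : ℤ) ∣ (N : ℤ) := ⟨z, by push_cast; linarith⟩
    exact_mod_cast this
  exact ⟨hdvd, Nat.le_of_dvd hN hdvd⟩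
end

section
/- Let m ≥ 2 and n ≥ 1 be integers. The system of linear equations over ℚ in the variables r1, ..., r_{m+n} consisting of: (m−j)·r_j − (r_{j+1} + r_{j+2} + ... + r_m) = 0 for each j with 1 ≤ j ≤ m−1; r1 − r_{m+1} = 0; r_l − r_{l+1} = 0 for each l with m+1 ≤ l ≤ m+n−1; and r1 + r2 + ... + r_{m+n} = 1, has the unique solution r_i = 1/(m+n) for all i. -/
/-- The construction matrix of the Scenario 3 pot for the lollipop graph `L_{m,n}`
(Proposition 3.13, equation (14)) has the unique solution `rᵢ = 1/(m+n)` for all `i`.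
Variables are indexed `1, …, m+n`. -/
theorem lollipop_S3_construction_matrix_unique_solution (m n : ℕ) (hm : 2 ≤ m) (hn : 1 ≤ n)
    (r : ℕ → ℚ)
    (h1 : ∀ j, 1 ≤ j → j ≤ m - 1 →
      ((m : ℚ) - (j : ℚ)) * r j - (∑ i ∈ Finset.Icc (j + 1) m, r i) = 0)
    (h2 : r 1 - r (m + 1) = 0)
    (h3 : ∀ l, m + 1 ≤ l → l ≤ m + n - 1 → r l - r (l + 1) = 0)
    (h4 : ∑ i ∈ Finset.Icc 1 (m + n), r i = 1) :
    ∀ i, 1 ≤ i → i ≤ m + n → r i = 1 / ((m : ℚ) + (n : ℚ)) := by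
  -- split the bottom element off the sum in h1
  have hsplit : ∀ j, j + 1 ≤ m →
      (∑ i ∈ Finset.Icc (j + 1) m, r i) = r (j + 1) + ∑ i ∈ Finset.Icc (j + 2) m, r i := by
    intro j hj
    have h1' : Finset.Icc (j + 2) m = Finset.Ioc (j + 1) m := (Finset.Icc_add_one_left_eq_Ioc _ _)
    rw [h1', ← Finset.Ioc_insert_left hj, Finset.sum_insert (by simp)]
  -- consecutive equalities in the clique part
  have step1 : ∀ j, 1 ≤ j → j ≤ m - 1 → r j = r (j + 1) := by
    intro j hj1 hjm
    have hjm' : j + 1 ≤ m := by omega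
    have hj := h1 j hj1 hjm
    rw [hsplit j hjm'] at hj
    have hmj : ((m : ℚ) - (j : ℚ)) ≠ 0 := by
      have : (j : ℚ) < (m : ℚ) := by exact_mod_cast (by omega : j < m)
      linarith
    by_cases hcase : j + 1 ≤ m - 1
    · have hj2 := h1 (j + 1) (by omega) hcase
      push_cast at hj2
      have key : ((m : ℚ) - (j : ℚ)) * (r j - r (j + 1)) = 0 := by ring_nf; ring_nf at hj hj2; linarith
      have := mul_eq_zero.mp key
      rcases this with h | h
      · exact absurd h hmj
      · linarith
    · -- j = m - 1
      have hjeq : j + 1 = m := by omega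
      have : Finset.Icc (j + 2) m = ∅ := by
        apply Finset.Icc_eq_empty; omega
      rw [this, Finset.sum_empty] at hj
      have hmjq : ((m : ℚ) - (j : ℚ)) = 1 := by
        have : (m : ℚ) = (j : ℚ) + 1 := by exact_mod_cast (by omega : m = j + 1)
        linarith
      rw [hmjq] at hj
      linarith
  -- all r i equal r 1 on the range
  have allEq : ∀ i, 1 ≤ i → i ≤ m + n → r i = r 1 := by
    intro i
    induction i with
    | zero => intro h; omega
    | succ k ih =>
      intro _ hk
      rcases Nat.eq_or_lt_of_le (Nat.one_le_iff_ne_zero.mpr (by omega) : 1 ≤ k + 1) with h | h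
      · rw [← h]
      · have hk1 : 1 ≤ k := by omega
        have hkmn : k ≤ m + n := by omega
        have hrk := ih hk1 hkmn
        by_cases hc1 : k ≤ m - 1
        · rw [← step1 k hk1 hc1]; exact hrk
        · by_cases hc2 : k = m
          · have := h2; rw [hc2]; linarith
          · have hl : m + 1 ≤ k := by omega
            have hl2 : k ≤ m + n - 1 := by omega
            have := h3 k hl hl2
            linarith
  -- sum up
  have hsum : (↑(m + n) : ℚ) * r 1 = 1 := by
    have : ∑ i ∈ Finset.Icc 1 (m + n), r i = ∑ i ∈ Finset.Icc 1 (m + n), r 1 := by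
      apply Finset.sum_congr rfl
      intro x hx
      simp only [Finset.mem_Icc] at hx
      exact allEq x hx.1 hx.2
    rw [this, Finset.sum_const, Nat.card_Icc] at h4
    simp at h4
    push_cast at h4 ⊢
    linarith [h4]
  intro i hi1 hi2
  rw [allEq i hi1 hi2]
  have hmn : ((m : ℚ) + (n : ℚ)) ≠ 0 := by positivity
  field_simp
  push_cast at hsum
  linarith
end

section
/- Let m ≥ 2 and n ≥ m be integers. The system of linear equations over ℚ in the variables r1, ..., r_{n+1} consisting of: 2·r1 − r2 = 0; r_j − r_{j+1} = 0 for each j with 2 ≤ j ≤ n and j ≠ m; r_m − r_1 − r_{m+1} = 0; and r1 + r2 + ... + r_{n+1} = 1, has the unique solution r1 = 1/(m+n), r_i = 2/(m+n) for 2 ≤ i ≤ m, and r_j = 1/(m+n) for m+1 ≤ j ≤ n+1. -/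
/-- The construction matrix of the pot from Proposition 4.6 realizing the tadpole graph
`Tad_{m,n}` with `n ≥ m` has the unique solution `r₁ = 1/(m+n)`, `rᵢ = 2/(m+n)` for
`2 ≤ i ≤ m`, and `r_j = 1/(m+n)` for `m+1 ≤ j ≤ n+1`. Variables are indexed `1, …, n+1`. -/
theorem tadpole_long_path_construction_matrix_unique_solution (m n : ℕ)
    (hm : 2 ≤ m) (hn : m ≤ n) (r : ℕ → ℚ)
    (h1 : 2 * r 1 - r 2 = 0)
    (h2 : ∀ j, 2 ≤ j → j ≤ n → j ≠ m → r j - r (j + 1) = 0)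
    (h3 : r m - r 1 - r (m + 1) = 0)
    (h4 : ∑ i ∈ Finset.Icc 1 (n + 1), r i = 1) :
    r 1 = 1 / ((m : ℚ) + (n : ℚ)) ∧
    (∀ i, 2 ≤ i → i ≤ m → r i = 2 / ((m : ℚ) + (n : ℚ))) ∧
    (∀ j, m + 1 ≤ j → j ≤ n + 1 → r j = 1 / ((m : ℚ) + (n : ℚ))) := by
  set a := r 1 with ha
  -- middle values equal 2a
  have hmid : ∀ i, 2 ≤ i → i ≤ m → r i = 2 * a := by
    intro i h2i him
    induction i with
    | zero => omega
    | succ k ih =>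
      rcases Nat.lt_or_ge k 2 with hk | hk
      · interval_cases k
        · omega
        · linarith
      · have hkm : k ≤ m - 1 := by omega
        have hkn : k ≤ n := by omega
        have hkne : k ≠ m := by omega
        have := h2 k hk hkn hkne
        have hrk := ih hk (by omega)
        linarith
  have hrm : r m = 2 * a := hmid m hm le_rfl
  -- tail values equal a
  have htail : ∀ j, m + 1 ≤ j → j ≤ n + 1 → r j = a := by
    intro j h1j h2j
    induction j with
    | zero => omega
    | succ k ih =>
      rcases Nat.lt_or_ge k (m + 1) with hk | hk
      · have : k = m := by omega
        subst this
        linarith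
      · have := h2 k (by omega) (by omega) (by omega)
        have hrk := ih hk (by omega)
        linarith
  -- compute the sum
  have hsplit : ∑ i ∈ Finset.Icc 1 (n + 1), r i
      = a + (m - 1) • (2 * a) + (n + 1 - m) • a := by
    have e1 : Finset.Icc 1 (n + 1) = Finset.Ioc 0 (n + 1) := by
      ext x; simp [Nat.lt_iff_add_one_le]
    rw [e1, ← Finset.sum_Ioc_consecutive r (Nat.zero_le m) (by omega : m ≤ n + 1),
        ← Finset.sum_Ioc_consecutive r (Nat.zero_le 1) (by omega : 1 ≤ m)]
    have s1 : ∑ i ∈ Finset.Ioc 0 1, r i = a := by simp [ha]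
    have s2 : ∑ i ∈ Finset.Ioc 1 m, r i = (m - 1) • (2 * a) := by
      rw [Finset.sum_congr rfl (fun x hx => by
        simp only [Finset.mem_Ioc] at hx
        exact hmid x (by omega) hx.2), Finset.sum_const, Nat.card_Ioc]
    have s3 : ∑ i ∈ Finset.Ioc m (n + 1), r i = (n + 1 - m) • a := by
      rw [Finset.sum_congr rfl (fun x hx => by
        simp only [Finset.mem_Ioc] at hx
        exact htail x (by omega) hx.2), Finset.sum_const, Nat.card_Ioc]
    rw [s1, s2, s3]
  rw [hsplit] at h4
  have hcast : ((m : ℚ) + n) * a = 1 := by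
    have hm1 : ((m - 1 : ℕ) : ℚ) = (m : ℚ) - 1 := by
      push_cast [Nat.cast_sub (by omega : 1 ≤ m)]; ring
    have hn1 : ((n + 1 - m : ℕ) : ℚ) = (n : ℚ) + 1 - m := by
      push_cast [Nat.cast_sub (by omega : m ≤ n + 1)]; ring
    simp only [nsmul_eq_mul, hm1, hn1] at h4
    linarith
  have hne : ((m : ℚ) + n) ≠ 0 := by
    have : (0 : ℚ) < (m : ℚ) + n := by
      have : (2 : ℚ) ≤ (m : ℚ) := by exact_mod_cast hm
      have : (0 : ℚ) ≤ (n : ℚ) := Nat.cast_nonneg n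
      linarith
    linarith
  have hval : a = 1 / ((m : ℚ) + n) := by
    field_simp
    linarith
  refine ⟨hval, fun i h2i him => ?_, fun j h1j h2j => ?_⟩
  · rw [hmid i h2i him, hval]; ring
  · rw [htail j h1j h2j, hval]
end

section
/- Let k ≥ 2 and n ≥ 1 be integers. The system of linear equations over ℚ in the variables r1, ..., r_{k+n+1} consisting of: 2·r1 − r2 = 0; r_j − r_{j+1} = 0 for each j with 2 ≤ j ≤ k−1; r_k − 2·r_{k+1} = 0; r1 − r_{k+2} = 0; r_l − r_{l+1} = 0 for each l with k+2 ≤ l ≤ k+n; and r1 + r2 + ... + r_{k+n+1} = 1, has the unique solution r1 = 1/(2k+n), r_i = 2/(2k+n) for 2 ≤ i ≤ k, and r_j = 1/(2k+n) for k+1 ≤ j ≤ k+n+1. -/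
/-- The construction matrix of the Scenario 3 pot for the tadpole graph `Tad_{2k,n}` with a
short path (Proposition 4.12, equation (11)) has the unique solution `r₁ = 1/(2k+n)`,
`rᵢ = 2/(2k+n)` for `2 ≤ i ≤ k`, and `r_j = 1/(2k+n)` for `k+1 ≤ j ≤ k+n+1`. Variables are
indexed `1, …, k+n+1`. -/
theorem tadpole_S3_construction_matrix_unique_solution (k n : ℕ)
    (hk : 2 ≤ k) (hn : 1 ≤ n) (r : ℕ → ℚ)
    (h1 : 2 * r 1 - r 2 = 0)
    (h2 : ∀ j, 2 ≤ j → j ≤ k - 1 → r j - r (j + 1) = 0)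
    (h3 : r k - 2 * r (k + 1) = 0)
    (h4 : r 1 - r (k + 2) = 0)
    (h5 : ∀ l, k + 2 ≤ l → l ≤ k + n → r l - r (l + 1) = 0)
    (h6 : ∑ i ∈ Finset.Icc 1 (k + n + 1), r i = 1) :
    r 1 = 1 / (2 * (k : ℚ) + (n : ℚ)) ∧
    (∀ i, 2 ≤ i → i ≤ k → r i = 2 / (2 * (k : ℚ) + (n : ℚ))) ∧
    (∀ j, k + 1 ≤ j → j ≤ k + n + 1 → r j = 1 / (2 * (k : ℚ) + (n : ℚ))) := by
  have hkQ : (2:ℚ) ≤ (k:ℚ) := by exact_mod_cast hk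
  have hnQ : (1:ℚ) ≤ (n:ℚ) := by exact_mod_cast hn
  have hD : 2 * (k:ℚ) + (n:ℚ) ≠ 0 := by positivity
  -- all r i for 2 ≤ i ≤ k equal 2 * r 1
  have h2' : ∀ i, 2 ≤ i → i ≤ k → r i = 2 * r 1 := by
    intro i hi
    induction i, hi using Nat.le_induction with
    | base => intro _; linarith [h1]
    | succ m hm ih =>
      intro hle
      have e1 := h2 m hm (by omega)
      have e2 := ih (by omega)
      linarith
  have hk1 : r (k + 1) = r 1 := by
    have := h2' k hk le_rfl
    linarith [h3]
  have h5' : ∀ l, k + 2 ≤ l → l ≤ k + n + 1 → r l = r 1 := by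
    intro l hl
    induction l, hl using Nat.le_induction with
    | base => intro _; linarith [h4]
    | succ m hm ih =>
      intro hle
      have e1 := h5 m hm (by omega)
      have e2 := ih (by omega)
      linarith
  -- compute the sum
  have hIcc : Finset.Icc 1 (k + n + 1) = Finset.Ico 1 (k + n + 2) := by
    rw [← Finset.Ico_add_one_right_eq_Icc]; rfl
  rw [hIcc] at h6
  have hs2 : ∑ i ∈ Finset.Ico 2 (k + 1), r i = ((k - 1 : ℕ) : ℚ) * (2 * r 1) := by
    have e : ∑ i ∈ Finset.Ico 2 (k + 1), r i = ∑ _i ∈ Finset.Ico 2 (k + 1), (2 * r 1) :=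
      Finset.sum_congr rfl (fun i hi => by
        rw [Finset.mem_Ico] at hi
        exact h2' i hi.1 (by omega))
    rw [e, Finset.sum_const, Nat.card_Ico, nsmul_eq_mul]
    have ecard : k + 1 - 2 = k - 1 := by omega
    rw [ecard]
  have hs3 : ∑ i ∈ Finset.Ico (k + 1) (k + n + 2), r i = ((n + 1 : ℕ) : ℚ) * r 1 := by
    have e : ∑ i ∈ Finset.Ico (k + 1) (k + n + 2), r i
        = ∑ _i ∈ Finset.Ico (k + 1) (k + n + 2), r 1 :=
      Finset.sum_congr rfl (fun i hi => by
        rw [Finset.mem_Ico] at hi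
        rcases eq_or_lt_of_le hi.1 with h | h
        · rw [← h]; exact hk1
        · exact h5' i (by omega) (by omega))
    rw [e, Finset.sum_const, Nat.card_Ico, nsmul_eq_mul]
    have ecard : k + n + 2 - (k + 1) = n + 1 := by omega
    rw [ecard]
  have hsplit1 : ∑ i ∈ Finset.Ico 1 2, r i + ∑ i ∈ Finset.Ico 2 (k + n + 2), r i
      = ∑ i ∈ Finset.Ico 1 (k + n + 2), r i :=
    Finset.sum_Ico_consecutive _ (by omega) (by omega)
  have hsplit2 : ∑ i ∈ Finset.Ico 2 (k + 1), r i + ∑ i ∈ Finset.Ico (k + 1) (k + n + 2), r i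
      = ∑ i ∈ Finset.Ico 2 (k + n + 2), r i :=
    Finset.sum_Ico_consecutive _ (by omega) (by omega)
  have hs1 : ∑ i ∈ Finset.Ico 1 2, r i = r 1 := by simp
  have hcast1 : ((k - 1 : ℕ) : ℚ) = (k : ℚ) - 1 := by
    have h1k : 1 ≤ k := by omega
    push_cast [h1k]
    ring
  have hcast2 : ((n + 1 : ℕ) : ℚ) = (n : ℚ) + 1 := by push_cast; ring
  rw [hcast1] at hs2
  rw [hcast2] at hs3
  have key : r 1 + ((k : ℚ) - 1) * (2 * r 1) + ((n : ℚ) + 1) * r 1 = 1 := by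
    linarith [h6, hsplit1, hsplit2, hs1, hs2, hs3]
  have hr1 : r 1 = 1 / (2 * (k : ℚ) + (n : ℚ)) := by
    rw [eq_div_iff hD]
    linarith
  refine ⟨hr1, ?_, ?_⟩
  · intro i hi1 hi2
    rw [h2' i hi1 hi2, hr1]
    ring
  · intro j hj1 hj2
    rcases eq_or_lt_of_le hj1 with h | h
    · rw [← h, hk1, hr1]
    · rw [h5' j (by omega) hj2, hr1]
end
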